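/- Let ε > 0, g : ℕ → ℕ, and define g̃(n) := n + g(n). Let K := g̃^(⌈1/ε⌉+1)(0) (the (⌈1/ε⌉+1)-fold iterate of g̃ applied to 0), and let (a_i)_{i=0}^{K} be a finite monotone sequence in [0,1]. Then there exists N ≤ g̃^(⌈1/ε⌉)(0) with N + g(N) ≤ K such that for all i, j ∈ [N, N+g(N)], |a_i − a_j| ≤ ε. -/

import Mathlib

lemma fmcp_aux
    (ε : ℝ) (hε : 0 < ε) (g : ℕ → ℕ) (a : ℕ → ℝ)
    (K : ℕ) (hK : K = (fun n => n + g n)^[⌈1/ε⌉₊ + 1] 0)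
    (ha : ∀ i ≤ K, a i ∈ Set.Icc (0:ℝ) 1)
    (hmono : ∀ i j, i ≤ j → j ≤ K → a i ≤ a j) :
    ∃ N ≤ (fun n => n + g n)^[⌈1/ε⌉₊] 0, N + g N ≤ K ∧
      ∀ i, N ≤ i → i ≤ N + g N → ∀ j, N ≤ j → j ≤ N + g N → |a i - a j| ≤ ε := by
  set m := ⌈1/ε⌉₊ with hm
  set f : ℕ → ℕ := fun n => n + g n with hf
  set x : ℕ → ℕ := fun k => f^[k] 0 with hxdef
  have hxsucc : ∀ k, x (k + 1) = x k + g (x k) := by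
    intro k
    simp [hxdef, Function.iterate_succ_apply', hf]
  have hxmono : Monotone x := by
    apply monotone_nat_of_le_succ
    intro k
    rw [hxsucc]; exact Nat.le_add_right _ _
  have hKx : K = x (m + 1) := hK
  have hmε : (1 : ℝ) ≤ m * ε := by
    have h1 : (1/ε) ≤ (m : ℝ) := Nat.le_ceil _
    calc (1:ℝ) = (1/ε) * ε := by field_simp
    _ ≤ m * ε := by nlinarith
  -- find k ≤ m with a (x (k+1)) - a (x k) ≤ ε
  by_cases hexists : ∃ k ≤ m, a (x (k + 1)) - a (x k) ≤ ε
  · obtain ⟨k, hk, hkε⟩ := hexists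
    refine ⟨x k, hxmono (by omega : k ≤ m), ?_, ?_⟩
    · rw [← hxsucc, hKx]; exact hxmono (by omega)
    · intro i hi1 hi2 j hj1 hj2
      rw [← hxsucc] at hi2 hj2
      have hxk1K : x (k + 1) ≤ K := by rw [hKx]; exact hxmono (by omega)
      have h1 : a (x k) ≤ a i := hmono _ _ hi1 (le_trans hi2 hxk1K)
      have h2 : a i ≤ a (x (k + 1)) := hmono _ _ hi2 hxk1K
      have h3 : a (x k) ≤ a j := hmono _ _ hj1 (le_trans hj2 hxk1K)
      have h4 : a j ≤ a (x (k + 1)) := hmono _ _ hj2 hxk1K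
      rw [abs_sub_le_iff]; constructor <;> linarith
  · exfalso
    push_neg at hexists
    have hgrow : ∀ k ≤ m + 1, a (x 0) + k * ε ≤ a (x k) := by
      intro k
      induction k with
      | zero => intro _; simp
      | succ n ih =>
        intro hn
        have h1 := ih (by omega)
        have h2 := hexists n (by omega)
        push_cast
        linarith
    have h := hgrow (m + 1) le_rfl
    have h0 : a (x 0) ∈ Set.Icc (0:ℝ) 1 := ha _ (by rw [hKx]; exact hxmono (by omega))
    have h1 : a (x (m + 1)) ∈ Set.Icc (0:ℝ) 1 := ha _ (le_of_eq hKx.symm)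
    obtain ⟨h0l, _⟩ := h0
    obtain ⟨_, h1r⟩ := h1
    push_cast at h
    nlinarith

theorem finite_monotone_convergence_principle
    (ε : ℝ) (hε : 0 < ε) (g : ℕ → ℕ) (a : ℕ → ℝ)
    (K : ℕ) (hK : K = (fun n => n + g n)^[⌈1/ε⌉₊ + 1] 0)
    (ha : ∀ i ≤ K, a i ∈ Set.Icc (0:ℝ) 1)
    (hmono : (∀ i j, i ≤ j → j ≤ K → a i ≤ a j) ∨ (∀ i j, i ≤ j → j ≤ K → a j ≤ a i)) :
    ∃ N ≤ (fun n => n + g n)^[⌈1/ε⌉₊] 0, N + g N ≤ K ∧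
      ∀ i, N ≤ i → i ≤ N + g N → ∀ j, N ≤ j → j ≤ N + g N → |a i - a j| ≤ ε := by
  rcases hmono with h | h
  · exact fmcp_aux ε hε g a K hK ha h
  · obtain ⟨N, hN1, hN2, hN3⟩ := fmcp_aux ε hε g (fun i => 1 - a i) K hK
      (fun i hi => ⟨by linarith [(ha i hi).2], by linarith [(ha i hi).1]⟩)
      (fun i j hij hjK => by linarith [h i j hij hjK])
    refine ⟨N, hN1, hN2, fun i hi1 hi2 j hj1 hj2 => ?_⟩
    have := hN3 i hi1 hi2 j hj1 hj2
    rw [abs_sub_comm]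
    convert this using 2
    ring
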